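/- arXiv:2603.23379 — 7 statements merged into one kernel-verified Lean document; each statement's English description precedes it below -/
import Mathlib

section
/- For every integer n ≥ 1 and every real x with 0 ≤ x ≤ 1, we have log(1 + x + x²/2! + ... + xⁿ/n!) ≤ x − x^{n+1}/(e·(n+1)!). -/
theorem stmt_0 (n : ℕ) (hn : 1 ≤ n) (x : ℝ) (hx0 : 0 ≤ x) (hx1 : x ≤ 1) :
    Real.log (∑ i ∈ Finset.range (n + 1), x ^ i / (Nat.factorial i : ℝ)) ≤
      x - x ^ (n + 1) / (Real.exp 1 * (Nat.factorial (n + 1) : ℝ)) := by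
  set S : ℝ := ∑ i ∈ Finset.range (n + 1), x ^ i / (Nat.factorial i : ℝ) with hS
  set t : ℝ := x ^ (n + 1) / (Nat.factorial (n + 1) : ℝ) with ht
  have ht0 : 0 ≤ t := by positivity
  have hSpos : (1 : ℝ) ≤ S := by
    rw [hS]
    calc (1 : ℝ) = x ^ 0 / (Nat.factorial 0 : ℝ) := by simp
    _ ≤ ∑ i ∈ Finset.range (n + 1), x ^ i / (Nat.factorial i : ℝ) := by
        apply Finset.single_le_sum (f := fun i => x ^ i / (Nat.factorial i : ℝ))
        · intro i _; positivity
        · simp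
  have hkey : S + t ≤ Real.exp x := by
    have := Real.sum_le_exp_of_nonneg hx0 (n + 2)
    rwa [Finset.sum_range_succ] at this
  have hex : Real.exp x ≤ Real.exp 1 := Real.exp_le_exp.mpr hx1
  have he : (0:ℝ) < Real.exp 1 := Real.exp_pos 1
  rw [Real.log_le_iff_le_exp (by linarith)]
  have h2 : Real.exp x - t ≤ Real.exp (x - t / Real.exp 1) := by
    rw [show x - t / Real.exp 1 = x + -(t / Real.exp 1) by ring, Real.exp_add]
    have h3 : 1 - t / Real.exp 1 ≤ Real.exp (-(t / Real.exp 1)) := by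
      have := Real.add_one_le_exp (-(t / Real.exp 1)); linarith
    have h5 : Real.exp x * (t / Real.exp 1) ≤ Real.exp 1 * (t / Real.exp 1) := by
      apply mul_le_mul_of_nonneg_right hex (by positivity)
    have h6 : Real.exp 1 * (t / Real.exp 1) = t := by field_simp
    nlinarith [Real.exp_pos x]
  have heq : x - x ^ (n + 1) / (Real.exp 1 * (Nat.factorial (n + 1) : ℝ)) = x - t / Real.exp 1 := by
    rw [ht]; field_simp
  rw [heq]
  linarith
end

section
/- For every integer n ≥ 1 and every real x with 0 ≤ x ≤ 1, the derivative of f(x) = log(∑_{i=0}^{n} xⁱ/i!) satisfies f'(x) ≤ 1 − xⁿ/(e·n!). -/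
theorem stmt_1 (n : ℕ) (hn : 1 ≤ n) (x : ℝ) (hx0 : 0 ≤ x) (hx1 : x ≤ 1) :
    deriv (fun y : ℝ => Real.log (∑ i ∈ Finset.range (n + 1), y ^ i / (Nat.factorial i : ℝ))) x ≤
      1 - x ^ n / (Real.exp 1 * (Nat.factorial n : ℝ)) := by
  set S : ℝ := ∑ i ∈ Finset.range (n + 1), x ^ i / (Nat.factorial i : ℝ) with hSdef
  have hS1 : (1 : ℝ) ≤ S := by
    have := Finset.single_le_sum (f := fun i => x ^ i / (Nat.factorial i : ℝ))
      (fun i _ => by positivity) (Finset.mem_range.mpr (Nat.succ_pos n))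
    simpa using this
  have hSpos : 0 < S := lt_of_lt_of_le one_pos hS1
  have hSe : S ≤ Real.exp 1 := by
    calc S ≤ Real.exp x := Real.sum_le_exp_of_nonneg hx0 (n + 1)
    _ ≤ Real.exp 1 := Real.exp_le_exp.mpr hx1
  -- derivative of the sum
  have hderiv : HasDerivAt
      (fun y : ℝ => ∑ i ∈ Finset.range (n + 1), y ^ i / (Nat.factorial i : ℝ))
      (∑ i ∈ Finset.range (n + 1), (i : ℝ) * x ^ (i - 1) / (Nat.factorial i : ℝ)) x := by
    apply HasDerivAt.fun_sum
    intro i _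
    simpa using (hasDerivAt_pow i x).div_const (Nat.factorial i : ℝ)
  have hsum : (∑ i ∈ Finset.range (n + 1), (i : ℝ) * x ^ (i - 1) / (Nat.factorial i : ℝ))
      = ∑ i ∈ Finset.range n, x ^ i / (Nat.factorial i : ℝ) := by
    rw [Finset.sum_range_succ' (fun i => (i : ℝ) * x ^ (i - 1) / (Nat.factorial i : ℝ)) n]
    simp only [Nat.cast_zero, zero_mul, zero_div, add_zero]
    apply Finset.sum_congr rfl
    intro i _
    have : ((i + 1 : ℕ) : ℝ) ≠ 0 := by positivity
    field_simp [Nat.factorial_succ, Nat.cast_mul]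
    simp only [Nat.factorial_succ, Nat.add_sub_cancel, Nat.add_sub_cancel_left, Nat.cast_mul, Nat.cast_add, Nat.cast_one]
    ring
  have hsplit : (∑ i ∈ Finset.range n, x ^ i / (Nat.factorial i : ℝ))
      = S - x ^ n / (Nat.factorial n : ℝ) := by
    rw [hSdef, Finset.sum_range_succ]; ring
  have hlog : HasDerivAt
      (fun y : ℝ => Real.log (∑ i ∈ Finset.range (n + 1), y ^ i / (Nat.factorial i : ℝ)))
      ((S - x ^ n / (Nat.factorial n : ℝ)) / S) x := by
    have := hderiv.log (ne_of_gt hSpos)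
    rwa [hsum, hsplit] at this
  rw [hlog.deriv]
  have hfac : (0 : ℝ) < (Nat.factorial n : ℝ) := by positivity
  have key : x ^ n / (Real.exp 1 * (Nat.factorial n : ℝ)) ≤ (x ^ n / (Nat.factorial n : ℝ)) / S := by
    rw [div_div]
    exact div_le_div_of_nonneg_left (by positivity) (by positivity) (by nlinarith)
  have : (S - x ^ n / (Nat.factorial n : ℝ)) / S = 1 - (x ^ n / (Nat.factorial n : ℝ)) / S := by
    field_simp
  rw [this]
  linarith
end

section
/- Let β ≥ 1 and n ≥ 1 be integers, and let G be the graph on vertex set [n]^{β+1} where two distinct vertices are adjacent if and only if they agree in at least one coordinate. In every β-frugal proper coloring of G, each color class has size at most β. Consequently, any β-frugal coloring of G uses at least n^{β+1}/β colors. -/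
/-- The graph on `[n]^{β+1}` where two distinct tuples are adjacent iff they agree in at
least one coordinate. -/
def agreeGraph (n β : ℕ) : SimpleGraph (Fin (β + 1) → Fin n) where
  Adj u v := u ≠ v ∧ ∃ i, u i = v i
  symm := ⟨fun _ _ ⟨h, ⟨i, hi⟩⟩ => ⟨h.symm, ⟨i, hi.symm⟩⟩⟩
  loopless := ⟨fun _ h => h.1 rfl⟩

instance (n β : ℕ) : DecidableRel (agreeGraph n β).Adj :=
  fun u v => inferInstanceAs (Decidable (u ≠ v ∧ ∃ i, u i = v i))

theorem stmt_6 (n β : ℕ) (hn : 1 ≤ n) (hβ : 1 ≤ β) (k : ℕ)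
    (c : (Fin (β + 1) → Fin n) → Fin k)
    (hproper : ∀ u v, (agreeGraph n β).Adj u v → c u ≠ c v)
    (hfrugal : ∀ v (a : Fin k),
      (((agreeGraph n β).neighborFinset v).filter (fun u => c u = a)).card ≤ β) :
    (∀ a : Fin k, (Finset.univ.filter (fun v => c v = a)).card ≤ β) ∧
      ((n : ℝ) ^ (β + 1) / (β : ℝ) ≤ (k : ℝ)) := by
  have key : ∀ a : Fin k, (Finset.univ.filter (fun v => c v = a)).card ≤ β := by
    intro a
    by_contra h
    push_neg at h
    have h' : β + 1 ≤ (Finset.univ.filter (fun v => c v = a)).card := h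
    obtain ⟨s, hs, hcard⟩ := Finset.exists_subset_card_eq h'
    have e := s.equivFinOfCardEq hcard
    set f : Fin (β+1) → (Fin (β+1) → Fin n) := fun i => (e.symm i : _) with hf
    have hfinj : Function.Injective f := by
      intro i j hij
      apply e.symm.injective
      exact Subtype.ext hij
    have hfc : ∀ i, c (f i) = a := by
      intro i
      have hm := hs (e.symm i).2
      exact (Finset.mem_filter.mp hm).2
    have hdis : ∀ i j, i ≠ j → ∀ t, f i t ≠ f j t := by
      intro i j hij t ht
      have hne : f i ≠ f j := fun hh => hij (hfinj hh)
      have hadj : (agreeGraph n β).Adj (f i) (f j) := ⟨hne, ⟨t, ht⟩⟩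
      exact hproper _ _ hadj (by rw [hfc, hfc])
    set w : Fin (β+1) → Fin n := fun i => f i i with hw
    have hadj : ∀ j, (agreeGraph n β).Adj w (f j) := by
      intro j
      refine ⟨?_, ⟨j, rfl⟩⟩
      intro hweq
      obtain ⟨i, hij⟩ : ∃ i : Fin (β+1), i ≠ j := by
        have : 2 ≤ Fintype.card (Fin (β+1)) := by simp; omega
        exact Fintype.exists_ne_of_one_lt_card (by omega) j
      have hd := hdis i j hij i
      apply hd
      have : w i = f j i := by rw [hweq]
      simpa [hw] using this.symm ▸ rfl
    have hsub : Finset.univ.image f ⊆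
        ((agreeGraph n β).neighborFinset w).filter (fun u => c u = a) := by
      intro u hu
      simp only [Finset.mem_image] at hu
      obtain ⟨j, _, rfl⟩ := hu
      rw [Finset.mem_filter, SimpleGraph.mem_neighborFinset]
      exact ⟨hadj j, hfc j⟩
    have hcard2 : β + 1 ≤
        (((agreeGraph n β).neighborFinset w).filter (fun u => c u = a)).card := by
      calc β + 1 = (Finset.univ.image f).card := by
            rw [Finset.card_image_of_injective _ hfinj, Finset.card_univ, Fintype.card_fin]
        _ ≤ _ := Finset.card_le_card hsub
    have := hfrugal w a
    omega
  refine ⟨key, ?_⟩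
  have htot : n ^ (β+1) ≤ k * β := by
    have hfib := Finset.card_eq_sum_card_fiberwise
      (f := c) (s := (Finset.univ : Finset (Fin (β+1) → Fin n))) (t := Finset.univ)
      (fun x _ => Finset.mem_univ _)
    rw [Finset.card_univ] at hfib
    have hcardv : Fintype.card (Fin (β+1) → Fin n) = n ^ (β+1) := by simp
    calc n^(β+1) = ∑ a : Fin k, (Finset.univ.filter fun v => c v = a).card := by
          rw [← hcardv, hfib]
      _ ≤ ∑ _a : Fin k, β := Finset.sum_le_sum (fun a _ => key a)
      _ = k * β := by simp [Finset.sum_const, Finset.card_univ, Nat.smul_one_eq_cast]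
  have hβpos : (0:ℝ) < (β:ℝ) := by exact_mod_cast hβ
  rw [div_le_iff₀ hβpos]
  have : ((n ^ (β+1) : ℕ) : ℝ) ≤ ((k * β : ℕ) : ℝ) := by exact_mod_cast htot
  push_cast at this
  linarith
end

section
/- Let t ≥ 2 and let G be a C_{2t}-free graph of maximum degree Δ ≥ 1. For a vertex u, call a non-adjacent vertex v special (for u) if u and v have more than 2t common neighbors. Then, if σ(u) denotes the set of vertices special for u, we have |σ(u)| < tΔ/t = Δ; in particular every vertex u has fewer than Δ special partners. -/
open Finset

section Aux

variable {V : Type*} [Fintype V] [DecidableEq V]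

private lemma esymm (G : SimpleGraph V) [DecidableRel G.Adj] (A B : Finset V) :
    ∑ a ∈ A, (B.filter (G.Adj a)).card = ∑ b ∈ B, (A.filter (G.Adj b)).card := by
  simp_rw [Finset.card_filter]
  rw [Finset.sum_comm]
  refine Finset.sum_congr rfl fun b _ => Finset.sum_congr rfl fun a _ => ?_
  have h : G.Adj a b ↔ G.Adj b a := G.adj_comm a b
  simp [h]

/-- Cleaning lemma: if the bipartite edge count between `A` and `B` exceeds
`s * (|A| + |B|)`, then there are nonempty subsets with min degree ≥ s+1. -/
private lemma clean (G : SimpleGraph V) [DecidableRel G.Adj] (s : ℕ) :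
    ∀ n (A B : Finset V), A.card + B.card ≤ n →
    s * (A.card + B.card) < ∑ a ∈ A, (B.filter (G.Adj a)).card →
    ∃ A' B', A' ⊆ A ∧ B' ⊆ B ∧ A'.Nonempty ∧ B'.Nonempty ∧
      (∀ a ∈ A', s + 1 ≤ (B'.filter (G.Adj a)).card) ∧
      (∀ b ∈ B', s + 1 ≤ (A'.filter (G.Adj b)).card) := by
  intro n
  induction n with
  | zero =>
    intro A B hn he
    have hA : A = ∅ := Finset.card_eq_zero.mp (by omega)
    subst hA
    simp at he
  | succ n ih =>
    intro A B hn he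
    by_cases hlowA : ∃ a ∈ A, (B.filter (G.Adj a)).card ≤ s
    · obtain ⟨a, haA, hdeg⟩ := hlowA
      have hsum : ∑ x ∈ A.erase a, (B.filter (G.Adj x)).card + (B.filter (G.Adj a)).card
          = ∑ x ∈ A, (B.filter (G.Adj x)).card := Finset.sum_erase_add A _ haA
      have hcard : (A.erase a).card = A.card - 1 := Finset.card_erase_of_mem haA
      have h1 : 1 ≤ A.card := Finset.card_pos.mpr ⟨a, haA⟩
      have hmul : s * ((A.card - 1) + B.card) + s = s * (A.card + B.card) := by
        have h2 : (A.card - 1) + B.card + 1 = A.card + B.card := by omega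
        rw [← h2, Nat.mul_succ]
      have hrec : s * ((A.erase a).card + B.card)
          < ∑ x ∈ A.erase a, (B.filter (G.Adj x)).card := by
        rw [hcard]; linarith
      obtain ⟨A', B', hsub₁, hsub₂, rest⟩ := ih (A.erase a) B (by omega) hrec
      exact ⟨A', B', hsub₁.trans (Finset.erase_subset _ _), hsub₂, rest⟩
    · by_cases hlowB : ∃ b ∈ B, (A.filter (G.Adj b)).card ≤ s
      · obtain ⟨b, hbB, hdeg⟩ := hlowB
        have hsum : ∑ x ∈ B.erase b, (A.filter (G.Adj x)).card + (A.filter (G.Adj b)).card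
            = ∑ x ∈ B, (A.filter (G.Adj x)).card := Finset.sum_erase_add B _ hbB
        have hcard : (B.erase b).card = B.card - 1 := Finset.card_erase_of_mem hbB
        have h1 : 1 ≤ B.card := Finset.card_pos.mpr ⟨b, hbB⟩
        have hmul : s * (A.card + (B.card - 1)) + s = s * (A.card + B.card) := by
          have h2 : A.card + (B.card - 1) + 1 = A.card + B.card := by omega
          rw [← h2, Nat.mul_succ]
        have he' : s * (A.card + B.card) < ∑ x ∈ B, (A.filter (G.Adj x)).card := by
          rwa [esymm] at he
        have hrec : s * (A.card + (B.erase b).card)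
            < ∑ x ∈ A, ((B.erase b).filter (G.Adj x)).card := by
          rw [esymm, hcard]; linarith
        obtain ⟨A', B', hsub₁, hsub₂, rest⟩ := ih A (B.erase b) (by omega) hrec
        exact ⟨A', B', hsub₁, hsub₂.trans (Finset.erase_subset _ _), rest⟩
      · push_neg at hlowA hlowB
        obtain ⟨a, haA, hapos⟩ := Finset.exists_ne_zero_of_sum_ne_zero
          (show (∑ a ∈ A, (B.filter (G.Adj a)).card) ≠ 0 by omega)
        have hBpos : (B.filter (G.Adj a)).Nonempty := Finset.card_pos.mp (by omega)
        obtain ⟨b, hb⟩ := hBpos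
        exact ⟨A, B, le_refl _, le_refl _, ⟨a, haA⟩, ⟨b, (Finset.mem_filter.mp hb).1⟩,
          fun x hx => hlowA x hx, fun x hx => hlowB x hx⟩

/-- Greedy alternating path in a "bipartite" pair with min degree ≥ t on both sides. -/
private lemma greedy (G : SimpleGraph V) [DecidableRel G.Adj] (t : ℕ)
    (A B : Finset V) (hdisj : ∀ x ∈ A, x ∉ B)
    (hA : ∀ a ∈ A, t ≤ (B.filter (G.Adj a)).card)
    (hB : ∀ b ∈ B, t ≤ (A.filter (G.Adj b)).card)
    (a₀ : V) (ha₀ : a₀ ∈ A) :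
    ∀ k, 1 ≤ k → k ≤ 2 * t - 1 → ∃ f : Fin k → V,
      (∀ i j : Fin k, f i = f j → i = j) ∧
      (∀ i : Fin k, f i ∈ (if (i : ℕ) % 2 = 0 then A else B)) ∧
      (∀ (i : ℕ) (h : i + 1 < k), G.Adj (f ⟨i, Nat.lt_of_succ_lt h⟩) (f ⟨i + 1, h⟩)) := by
  intro k
  induction k with
  | zero => omega
  | succ k ih =>
    intro _ hk2
    rcases Nat.eq_zero_or_pos k with hk0 | hk1
    · subst hk0
      refine ⟨fun _ => a₀, fun i j _ => Fin.ext (by omega), ?_, fun i h => absurd h (by omega)⟩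
      intro i
      have hi0 : (i : ℕ) = 0 := by omega
      simp [hi0, ha₀]
    · have hk2t : k ≤ 2 * t - 1 := by omega
      obtain ⟨f, hinj, hmem, hadj⟩ := ih hk1 hk2t
      have hkle : k ≤ 2 * t - 2 := by omega
      set last : V := f ⟨k - 1, by omega⟩ with hlast
      set target : Finset V := if k % 2 = 0 then A else B with htarget
      have hlastmem : last ∈ (if (k - 1) % 2 = 0 then A else B) := hmem ⟨k - 1, by omega⟩
      have hdeg : t ≤ (target.filter (G.Adj last)).card := by
        rcases Nat.even_or_odd k with hke | hko
        · have hkm : k % 2 = 0 := Nat.even_iff.mp hke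
          have hkm1 : (k - 1) % 2 = 1 := by omega
          rw [if_neg (by omega)] at hlastmem
          rw [htarget, if_pos hkm]
          exact hB last hlastmem
        · have hkm : k % 2 = 1 := Nat.odd_iff.mp hko
          have hkm1 : (k - 1) % 2 = 0 := by omega
          rw [if_pos hkm1] at hlastmem
          rw [htarget, if_neg (by omega)]
          exact hA last hlastmem
      set U : Finset V :=
        ((Finset.univ : Finset (Fin k)).filter (fun i : Fin k => (i : ℕ) % 2 = k % 2)).image f
        with hU
      have hUcard : U.card ≤ t - 1 := by
        have h1 : ((Finset.univ : Finset (Fin k)).filter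
            (fun i : Fin k => (i : ℕ) % 2 = k % 2)).card ≤ (Finset.range (k / 2)).card := by
          apply Finset.card_le_card_of_injOn (fun i : Fin k => (i : ℕ) / 2)
          · intro i hi
            simp only [Finset.coe_filter, Finset.mem_coe, Finset.mem_filter, Finset.mem_univ, true_and, Set.mem_setOf_eq] at hi
            have h2 := i.isLt
            simp only [Finset.mem_coe, Finset.mem_range]
            omega
          · intro i hi j hj hij
            simp only [Finset.coe_filter, Set.mem_setOf_eq] at hi hj
            have hij' : (i : ℕ) / 2 = (j : ℕ) / 2 := hij
            have h1 := i.isLt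
            have h2 := j.isLt
            exact Fin.ext (by omega)
        have h2 : (Finset.range (k / 2)).card = k / 2 := Finset.card_range _
        calc U.card ≤ _ := Finset.card_image_le
          _ ≤ k / 2 := by rw [← h2]; exact h1
          _ ≤ t - 1 := by omega
      have hsd : 0 < ((target.filter (G.Adj last)) \ U).card := by
        have h3 := Finset.le_card_sdiff U (target.filter (G.Adj last))
        omega
      obtain ⟨x, hx⟩ := Finset.card_pos.mp hsd
      rw [Finset.mem_sdiff, Finset.mem_filter] at hx
      obtain ⟨⟨hxT, hxadj⟩, hxU⟩ := hx
      refine ⟨fun i : Fin (k + 1) => if h : (i : ℕ) < k then f ⟨(i : ℕ), h⟩ else x, ?_, ?_, ?_⟩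
      · -- injective
        intro i j heq
        dsimp only at heq
        by_cases hi : (i : ℕ) < k <;> by_cases hj : (j : ℕ) < k
        · rw [dif_pos hi, dif_pos hj] at heq
          have h12 := hinj ⟨(i : ℕ), hi⟩ ⟨(j : ℕ), hj⟩ heq
          exact Fin.ext (Fin.mk_eq_mk.mp h12)
        · exfalso
          rw [dif_pos hi, dif_neg hj] at heq
          by_cases hpar : (i : ℕ) % 2 = k % 2
          · exact hxU (heq ▸ Finset.mem_image.mpr
              ⟨⟨(i : ℕ), hi⟩, Finset.mem_filter.mpr ⟨Finset.mem_univ _, hpar⟩, rfl⟩)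
          · have hmi : f ⟨(i : ℕ), hi⟩ ∈ (if (i : ℕ) % 2 = 0 then A else B) :=
              hmem ⟨(i : ℕ), hi⟩
            rcases Nat.even_or_odd k with hke | hko
            · have hkm : k % 2 = 0 := Nat.even_iff.mp hke
              rw [htarget, if_pos hkm] at hxT
              rw [if_neg (by omega)] at hmi
              exact hdisj x hxT (heq ▸ hmi)
            · have hkm : k % 2 = 1 := Nat.odd_iff.mp hko
              rw [htarget, if_neg (by omega)] at hxT
              rw [if_pos (by omega)] at hmi
              exact hdisj (f ⟨(i : ℕ), hi⟩) hmi (heq ▸ hxT)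
        · exfalso
          rw [dif_neg hi, dif_pos hj] at heq
          by_cases hpar : (j : ℕ) % 2 = k % 2
          · exact hxU (heq ▸ Finset.mem_image.mpr
              ⟨⟨(j : ℕ), hj⟩, Finset.mem_filter.mpr ⟨Finset.mem_univ _, hpar⟩, rfl⟩)
          · have hmj : f ⟨(j : ℕ), hj⟩ ∈ (if (j : ℕ) % 2 = 0 then A else B) :=
              hmem ⟨(j : ℕ), hj⟩
            rcases Nat.even_or_odd k with hke | hko
            · have hkm : k % 2 = 0 := Nat.even_iff.mp hke
              rw [htarget, if_pos hkm] at hxT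
              rw [if_neg (by omega)] at hmj
              exact hdisj x hxT (heq ▸ hmj)
            · have hkm : k % 2 = 1 := Nat.odd_iff.mp hko
              rw [htarget, if_neg (by omega)] at hxT
              rw [if_pos (by omega)] at hmj
              exact hdisj (f ⟨(j : ℕ), hj⟩) hmj (heq ▸ hxT)
        · have h4 : (i : ℕ) = k ∧ (j : ℕ) = k := by
            have := i.isLt; have := j.isLt; omega
          exact Fin.ext (by omega)
      · -- membership
        intro i
        dsimp only
        by_cases hi : (i : ℕ) < k
        · rw [dif_pos hi]
          exact hmem ⟨(i : ℕ), hi⟩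
        · rw [dif_neg hi]
          have hik : (i : ℕ) = k := by have := i.isLt; omega
          rw [hik]
          rcases Nat.even_or_odd k with hke | hko
          · have hkm : k % 2 = 0 := Nat.even_iff.mp hke
            rw [htarget, if_pos hkm] at hxT
            rw [if_pos hkm]
            exact hxT
          · have hkm : k % 2 = 1 := Nat.odd_iff.mp hko
            rw [htarget, if_neg (by omega)] at hxT
            rw [if_neg (by omega)]
            exact hxT
      · -- adjacency
        intro i h
        dsimp only
        by_cases hi1 : i + 1 < k
        · have hi : i < k := Nat.lt_of_succ_lt hi1
          rw [dif_pos hi, dif_pos hi1]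
          exact hadj i hi1
        · have hik : i + 1 = k := by omega
          have hi : i < k := by omega
          rw [dif_pos hi, dif_neg (by omega : ¬ i + 1 < k)]
          have h5 : (⟨i, hi⟩ : Fin k) = ⟨k - 1, by omega⟩ := Fin.mk_eq_mk.mpr (by omega)
          rw [h5]
          exact hxadj

end Aux

theorem stmt_10 {V : Type*} [Fintype V] [DecidableEq V] (G : SimpleGraph V)
    [DecidableRel G.Adj] (t Δ : ℕ) (ht : 2 ≤ t) (hΔ : 1 ≤ Δ)
    (hdeg : ∀ v, G.degree v ≤ Δ)
    (hfree : ¬ ∃ f : ZMod (2 * t) → V, Function.Injective f ∧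
      ∀ i : ZMod (2 * t), G.Adj (f i) (f (i + 1))) (u : V) :
    (Finset.univ.filter (fun v => v ≠ u ∧ ¬ G.Adj u v ∧
      2 * t < (G.neighborFinset u ∩ G.neighborFinset v).card)).card < Δ := by
  by_contra hcon
  push_neg at hcon
  set σF := (Finset.univ.filter (fun v => v ≠ u ∧ ¬ G.Adj u v ∧
      2 * t < (G.neighborFinset u ∩ G.neighborFinset v).card)) with hσF
  set Nu := G.neighborFinset u with hNudef
  have hNu : Nu.card ≤ Δ := hdeg u
  have hdegB : ∀ v ∈ σF, 2 * t + 1 ≤ (Nu.filter (G.Adj v)).card := by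
    intro v hv
    rw [hσF, Finset.mem_filter] at hv
    obtain ⟨-, hne, hnadj, hcard⟩ := hv
    have hsub : Nu ∩ G.neighborFinset v ⊆ Nu.filter (G.Adj v) := by
      intro w hw
      rw [Finset.mem_inter] at hw
      refine Finset.mem_filter.mpr ⟨hw.1, ?_⟩
      have h6 := hw.2
      rwa [SimpleGraph.mem_neighborFinset] at h6
    have h7 := Finset.card_le_card hsub
    omega
  have hσpos : 1 ≤ σF.card := le_trans hΔ hcon
  have hE : (t - 1) * (Nu.card + σF.card) < ∑ a ∈ Nu, (σF.filter (G.Adj a)).card := by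
    rw [esymm]
    have hge : (2 * t + 1) * σF.card ≤ ∑ v ∈ σF, (Nu.filter (G.Adj v)).card := by
      calc (2 * t + 1) * σF.card = ∑ _v ∈ σF, (2 * t + 1) := by
            rw [Finset.sum_const, smul_eq_mul, mul_comm]
        _ ≤ _ := Finset.sum_le_sum hdegB
    calc (t - 1) * (Nu.card + σF.card) ≤ (t - 1) * (σF.card + σF.card) :=
          Nat.mul_le_mul_left _ (by omega)
      _ = ((t - 1) * 2) * σF.card := by ring
      _ < (2 * t + 1) * σF.card :=
          (Nat.mul_lt_mul_right (show 0 < σF.card by omega)).mpr (by omega)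
      _ ≤ _ := hge
  obtain ⟨A', B', hA'sub, hB'sub, hA'ne, hB'ne, hA'deg, hB'deg⟩ :=
    clean G (t - 1) (Nu.card + σF.card) Nu σF (le_refl _) hE
  have ht1 : t - 1 + 1 = t := by omega
  rw [ht1] at hA'deg hB'deg
  have hdisj : ∀ x ∈ A', x ∉ B' := by
    intro x hxA hxB
    have h1 : G.Adj u x := by
      have h7 := hA'sub hxA
      rwa [hNudef, SimpleGraph.mem_neighborFinset] at h7
    have h2 := hB'sub hxB
    rw [hσF, Finset.mem_filter] at h2
    exact h2.2.2.1 h1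
  obtain ⟨a₀, ha₀⟩ := hA'ne
  obtain ⟨p, pinj, pmem, padj⟩ := greedy G t A' B' hdisj hA'deg hB'deg a₀ ha₀
    (2 * t - 1) (by omega) (le_refl _)
  have hpA : ∀ (i : ℕ) (h : i < 2 * t - 1), i % 2 = 0 → G.Adj u (p ⟨i, h⟩) := by
    intro i h hi
    have hm : p ⟨i, h⟩ ∈ (if i % 2 = 0 then A' else B') := pmem ⟨i, h⟩
    rw [if_pos hi] at hm
    have h8 := hA'sub hm
    rwa [hNudef, SimpleGraph.mem_neighborFinset] at h8
  have hpne : ∀ i : Fin (2 * t - 1), p i ≠ u := by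
    intro i hiu
    have hm := pmem i
    by_cases hpar : (i : ℕ) % 2 = 0
    · rw [if_pos hpar] at hm
      have h9 := hA'sub hm
      rw [hNudef, SimpleGraph.mem_neighborFinset, hiu] at h9
      exact G.irrefl h9
    · rw [if_neg hpar] at hm
      have h10 := hB'sub hm
      rw [hσF, Finset.mem_filter] at h10
      exact h10.2.1 hiu
  haveI : NeZero (2 * t) := ⟨by omega⟩
  have hval1 : (1 : ZMod (2 * t)).val = 1 := by
    rw [ZMod.val_one_eq_one_mod]
    exact Nat.mod_eq_of_lt (by omega)
  apply hfree
  refine ⟨fun i => if h : i.val = 0 then u else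
    p ⟨i.val - 1, by have := ZMod.val_lt i; omega⟩, ?_, ?_⟩
  · -- injective
    intro i j heq
    dsimp only at heq
    have hi' := ZMod.val_lt i
    have hj' := ZMod.val_lt j
    by_cases hi : i.val = 0 <;> by_cases hj : j.val = 0
    · exact ZMod.val_injective _ (by omega)
    · rw [dif_pos hi, dif_neg hj] at heq
      exact absurd heq.symm (hpne _)
    · rw [dif_neg hi, dif_pos hj] at heq
      exact absurd heq (hpne _)
    · rw [dif_neg hi, dif_neg hj] at heq
      have h11 := pinj _ _ heq
      have hv : i.val - 1 = j.val - 1 := congrArg Fin.val h11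
      exact ZMod.val_injective _ (by omega)
  · -- adjacency
    intro i
    dsimp only
    have hilt := ZMod.val_lt i
    have hadd : (i + 1).val = (i.val + 1) % (2 * t) := by
      rw [ZMod.val_add, hval1]
    by_cases hi0 : i.val = 0
    · have h1 : (i + 1).val = 1 := by
        rw [hadd, hi0]; exact Nat.mod_eq_of_lt (by omega)
      rw [dif_pos hi0, dif_neg (by omega : ¬ (i + 1).val = 0)]
      exact hpA ((i + 1).val - 1) (by omega) (by omega)
    · by_cases hitop : i.val = 2 * t - 1
      · have h0 : (i + 1).val = 0 := by
          rw [hadd, hitop]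
          have h2t : 2 * t - 1 + 1 = 2 * t := by omega
          rw [h2t, Nat.mod_self]
        rw [dif_neg hi0, dif_pos h0]
        exact (hpA (i.val - 1) (by omega) (by omega)).symm
      · have h1 : (i + 1).val = i.val + 1 := by
          rw [hadd]; exact Nat.mod_eq_of_lt (by omega)
        rw [dif_neg hi0, dif_neg (by omega : ¬ (i + 1).val = 0)]
        have hadjp := padj (i.val - 1) (by omega)
        have e1 : (⟨i.val - 1 + 1, by omega⟩ : Fin (2 * t - 1)) =
            ⟨(i + 1).val - 1, by omega⟩ := Fin.mk_eq_mk.mpr (by omega)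
        rwa [e1] at hadjp
end

section
/- Let t ≥ 2 and let G be a C_{2t}-free graph. Let u be a vertex and σ(u) the set of vertices v non-adjacent to u with |N(u) ∩ N(v)| > 2t. Then the bipartite graph H between N(u) and σ(u) induced by edges of G contains no path on 2t vertices as a subgraph. -/
lemma cycle_aux {V : Type*} (G : SimpleGraph V) (n : ℕ) (hn : 2 ≤ n) (u : V) (p : ℕ → V)
    (hinj : ∀ i j, i ≤ n-2 → j ≤ n-2 → p i = p j → i = j)
    (hne : ∀ i, i ≤ n-2 → p i ≠ u)
    (hadj : ∀ i, i+1 ≤ n-2 → G.Adj (p i) (p (i+1)))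
    (h0 : G.Adj u (p 0)) (hlast : G.Adj (p (n-2)) u) :
    ∃ g : ZMod n → V, Function.Injective g ∧ ∀ i, G.Adj (g i) (g (i + 1)) := by
  haveI : NeZero n := ⟨by omega⟩
  refine ⟨fun i => if i.val = 0 then u else p (i.val - 1), ?_, ?_⟩
  · intro a b hab
    have ha : a.val < n := ZMod.val_lt a
    have hb : b.val < n := ZMod.val_lt b
    simp only at hab
    apply ZMod.val_injective n
    show a.val = b.val
    by_cases h1 : a.val = 0 <;> by_cases h2 : b.val = 0
    · omega
    · rw [if_pos h1, if_neg h2] at hab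
      exact absurd hab.symm (hne _ (by omega))
    · rw [if_neg h1, if_pos h2] at hab
      exact absurd hab (hne _ (by omega))
    · rw [if_neg h1, if_neg h2] at hab
      have := hinj _ _ (by omega) (by omega) hab
      omega
  · intro i
    have hv : i.val < n := ZMod.val_lt i
    haveI : Fact (1 < n) := ⟨by omega⟩
    have hadd : (i + 1).val = (i.val + 1) % n := by
      rw [ZMod.val_add, ZMod.val_one]
    by_cases h1 : i.val = 0
    · have : (i+1).val = 1 := by
        rw [hadd, h1, Nat.mod_eq_of_lt (by omega)]
      simp only [h1, this, if_pos rfl, if_neg (by omega : (1:ℕ) ≠ 0)]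
      exact h0
    · by_cases h2 : i.val = n - 1
      · have : (i+1).val = 0 := by
          rw [hadd, show i.val + 1 = n by omega, Nat.mod_self]
        simp only [this, if_pos rfl, if_neg h1]
        have : i.val - 1 = n - 2 := by omega
        rw [this]; exact hlast
      · have : (i+1).val = i.val + 1 := by
          rw [hadd, Nat.mod_eq_of_lt (by omega)]
        simp only [this, if_neg h1, if_neg (by omega : i.val + 1 ≠ 0)]
        have h3 : i.val + 1 - 1 = (i.val - 1) + 1 := by omega
        rw [h3]
        exact hadj _ (by omega)

theorem stmt_11 {V : Type*} [Fintype V] [DecidableEq V] (G : SimpleGraph V)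
    [DecidableRel G.Adj] (t : ℕ) (ht : 2 ≤ t)
    (hfree : ¬ ∃ f : ZMod (2 * t) → V, Function.Injective f ∧
      ∀ i : ZMod (2 * t), G.Adj (f i) (f (i + 1)))
    (u : V) (σ : Set V)
    (hσ : σ = {v | v ≠ u ∧ ¬ G.Adj u v ∧
      2 * t < (G.neighborFinset u ∩ G.neighborFinset v).card}) :
    ¬ ∃ f : Fin (2 * t) → V, Function.Injective f ∧
      ∀ (i : ℕ) (h : i + 1 < 2 * t),
        G.Adj (f ⟨i, Nat.lt_of_succ_lt h⟩) (f ⟨i + 1, h⟩) ∧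
        ((f ⟨i, Nat.lt_of_succ_lt h⟩ ∈ G.neighborSet u ∧ f ⟨i + 1, h⟩ ∈ σ) ∨
          (f ⟨i, Nat.lt_of_succ_lt h⟩ ∈ σ ∧ f ⟨i + 1, h⟩ ∈ G.neighborSet u)) := by
  rintro ⟨q, hinj, hadj⟩
  have hn4 : 4 ≤ 2 * t := by omega
  obtain ⟨f', hf'⟩ : ∃ f' : ℕ → V, ∀ i (h : i < (2*t)), f' i = q ⟨i, h⟩ :=
    ⟨fun i => if h : i < (2*t) then q ⟨i, h⟩ else u, fun i h => dif_pos h⟩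
  have hf'inj : ∀ i j, i < (2*t) → j < (2*t) → f' i = f' j → i = j := by
    intro i j hi hj hij
    rw [hf' i hi, hf' j hj] at hij
    exact Fin.mk.inj_iff.mp (hinj hij)
  have hedge : ∀ i, i + 1 < (2*t) → (G.Adj (f' i) (f' (i+1)) ∧
      ((f' i ∈ G.neighborSet u ∧ f' (i+1) ∈ σ) ∨ (f' i ∈ σ ∧ f' (i+1) ∈ G.neighborSet u))) := by
    intro i h
    rw [hf' i (Nat.lt_of_succ_lt h), hf' (i+1) h]
    exact hadj i h
  have hdisj : ∀ v, v ∈ σ → v ∉ G.neighborSet u := by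
    intro v hv hv'
    rw [hσ] at hv
    exact hv.2.1 (by simpa using hv')
  have halter : ∀ i, i + 1 < (2*t) → (f' (i+1) ∈ G.neighborSet u ↔ f' i ∉ G.neighborSet u) := by
    intro i h
    rcases (hedge i h).2 with ⟨h1, h2⟩ | ⟨h1, h2⟩
    · simp [h1, hdisj _ h2]
    · simp [h2, hdisj _ h1]
  have hpar : ∀ i, i < (2*t) → (f' i ∈ G.neighborSet u ↔ (Even i ↔ f' 0 ∈ G.neighborSet u)) := by
    intro i
    induction i with
    | zero => simp
    | succ k ih =>
      intro hk
      have h1 := halter k hk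
      have h2 := ih (by omega)
      rw [Nat.even_add_one]
      tauto
  have hmemσ : ∀ i, i < (2*t) → f' i ∉ G.neighborSet u → f' i ∈ σ := by
    intro i hi hiN
    by_cases h : i + 1 < (2*t)
    · rcases (hedge i h).2 with ⟨h1, _⟩ | ⟨h1, _⟩
      · exact absurd h1 hiN
      · exact h1
    · have hi' : i = (2*t) - 1 := by omega
      have h2 : (i - 1) + 1 < (2*t) := by omega
      have h3 : (i - 1) + 1 = i := by omega
      rcases (hedge (i-1) h2).2 with ⟨_, h1⟩ | ⟨_, h1⟩ <;> rw [h3] at h1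
      · exact h1
      · exact absurd h1 hiN
  have hneu : ∀ i, i < (2*t) → f' i ≠ u := by
    intro i hi
    by_cases h : f' i ∈ G.neighborSet u
    · exact (SimpleGraph.mem_neighborSet G u (f' i) |>.mp h).ne'
    · have := hmemσ i hi h
      rw [hσ] at this
      exact this.1
  by_cases hP0 : f' 0 ∈ G.neighborSet u
  · refine hfree (cycle_aux G (2*t) (by omega) u f' ?_ ?_ ?_ ?_ ?_)
    · intro i j hi hj; exact hf'inj i j (by omega) (by omega)
    · intro i hi; exact hneu i (by omega)
    · intro i hi; exact (hedge i (by omega)).1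
    · exact hP0
    · have : f' ((2*t)-2) ∈ G.neighborSet u := by
        rw [hpar ((2*t)-2) (by omega)]
        constructor
        · intro _; exact hP0
        · intro _; exact ⟨t - 1, by omega⟩
      exact ((SimpleGraph.mem_neighborSet G u _).mp this).symm
  · refine hfree (cycle_aux G (2*t) (by omega) u (fun j => f' (j+1)) ?_ ?_ ?_ ?_ ?_)
    · intro i j hi hj hij
      have := hf'inj (i+1) (j+1) (by omega) (by omega) hij
      omega
    · intro i hi; exact hneu (i+1) (by omega)
    · intro i hi; exact (hedge (i+1) (by omega)).1
    · have h1 : f' 1 ∈ G.neighborSet u := by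
        rw [hpar 1 (by omega)]
        constructor
        · intro h; exact absurd h (by decide)
        · intro h; exact absurd h hP0
      exact (SimpleGraph.mem_neighborSet G u _).mp h1
    · have h1 : f' ((2*t)-2+1) ∈ G.neighborSet u := by
        rw [hpar ((2*t)-2+1) (by omega)]
        have : ¬ Even ((2*t)-2+1) := by
          have : (2*t) - 2 + 1 = 2*(t-1) + 1 := by omega
          rw [this]; simp [Nat.even_add_one, parity_simps]
        constructor
        · intro h; exact absurd h this
        · intro h; exact absurd h hP0
      exact ((SimpleGraph.mem_neighborSet G u _).mp h1).symm
end

section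
/- Kővári–Sós–Turán bound: for integers a ≥ s ≥ 2 and b ≥ t ≥ 2, every bipartite graph with parts A of size a and B of size b that contains no copy of K_{s,t} with the s-side in A and the t-side in B has at most (t−1)^{1/s}·(a−s+1)·b^{1−1/s} + (s−1)·b edges. -/
open Finset

theorem stmt_12 {α β : Type*} (A : Finset α) (B : Finset β) (r : α → β → Prop)
    (a b s t : ℕ) (hA : A.card = a) (hB : B.card = b)
    (hs : 2 ≤ s) (hsa : s ≤ a) (ht : 2 ≤ t) (htb : t ≤ b)
    (hfree : ¬ ∃ (S : Finset α) (T : Finset β), S ⊆ A ∧ T ⊆ B ∧ S.card = s ∧ T.card = t ∧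
      ∀ x ∈ S, ∀ y ∈ T, r x y) :
    ({p : α × β | p.1 ∈ A ∧ p.2 ∈ B ∧ r p.1 p.2}.ncard : ℝ) ≤
      ((t : ℝ) - 1) ^ ((1 : ℝ) / s) * ((a : ℝ) - s + 1) * (b : ℝ) ^ (1 - (1 : ℝ) / s) +
        ((s : ℝ) - 1) * b := by
  classical
  set E : Finset (α × β) := (A ×ˢ B).filter (fun p => r p.1 p.2) with hE
  have hset : {p : α × β | p.1 ∈ A ∧ p.2 ∈ B ∧ r p.1 p.2} = ↑E := by
    ext p; simp [hE, Finset.mem_filter, Finset.mem_product, and_assoc]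
  rw [hset, Set.ncard_coe_finset]
  set d : β → ℕ := fun y => (A.filter fun x => r x y).card with hd
  have hcard : E.card = ∑ y ∈ B, d y := by
    rw [hE, Finset.card_filter, Finset.sum_product_right]
    refine Finset.sum_congr rfl fun y hy => ?_
    simp only [hd]
    exact (Finset.card_filter _ _).symm
  -- per-S common neighborhood bound
  have hSb : ∀ S ∈ A.powersetCard s, (B.filter fun y => ∀ x ∈ S, r x y).card ≤ t - 1 := by
    intro S hSmem
    rw [Finset.mem_powersetCard] at hSmem
    by_contra h
    push_neg at h
    have ht' : t ≤ (B.filter fun y => ∀ x ∈ S, r x y).card := by omega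
    obtain ⟨T, hTsub, hTcard⟩ := Finset.exists_subset_card_eq ht'
    exact hfree ⟨S, T, hSmem.1, hTsub.trans (Finset.filter_subset _ _), hSmem.2, hTcard,
      fun x hx y hy => (Finset.mem_filter.mp (hTsub hy)).2 x hx⟩
  -- double counting
  have hsum : ∑ y ∈ B, (d y).choose s ≤ (t - 1) * a.choose s := by
    have key : ∀ y, (d y).choose s
        = ∑ S ∈ A.powersetCard s, if (∀ x ∈ S, r x y) then 1 else 0 := by
      intro y
      simp only [hd]
      rw [← Finset.card_powersetCard, ← Finset.card_filter]
      congr 1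
      ext S
      simp only [Finset.mem_powersetCard, Finset.mem_filter]
      constructor
      · rintro ⟨hsub, hc⟩
        exact ⟨⟨fun x hx => (Finset.mem_filter.mp (hsub hx)).1, hc⟩,
          fun x hx => (Finset.mem_filter.mp (hsub hx)).2⟩
      · rintro ⟨⟨hsub, hc⟩, hr⟩
        exact ⟨fun x hx => Finset.mem_filter.mpr ⟨hsub hx, hr x hx⟩, hc⟩
    calc ∑ y ∈ B, (d y).choose s
        = ∑ S ∈ A.powersetCard s, (B.filter fun y => ∀ x ∈ S, r x y).card := by
          simp_rw [key]; rw [Finset.sum_comm]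
          exact Finset.sum_congr rfl fun S _ => (Finset.card_filter _ _).symm
      _ ≤ ∑ _S ∈ A.powersetCard s, (t - 1) := Finset.sum_le_sum hSb
      _ = (t - 1) * a.choose s := by
          rw [Finset.sum_const, smul_eq_mul, Finset.card_powersetCard, hA, mul_comm]
  -- real setup
  set e : β → ℝ := fun y => max ((d y : ℝ) - ((s : ℝ) - 1)) 0 with he
  have hda : ∀ y, d y ≤ a := fun y => hA ▸ Finset.card_le_card (Finset.filter_subset _ _)
  have hsa' : (s : ℝ) ≤ (a : ℝ) := by exact_mod_cast hsa
  have hs1 : (1 : ℝ) ≤ (s : ℝ) := by exact_mod_cast (by omega : 1 ≤ s)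
  have has1 : (1 : ℝ) ≤ (a : ℝ) - ((s : ℝ) - 1) := by linarith
  -- pointwise inequality
  have hpoint : ∀ y, (e y) ^ s * (a.choose s : ℝ)
      ≤ ((d y).choose s : ℝ) * ((a : ℝ) - ((s : ℝ) - 1)) ^ s := by
    intro y
    rcases lt_or_ge (d y) s with hlt | hge
    · have he0 : e y = 0 := by
        rw [he]
        refine max_eq_right (sub_nonpos.mpr ?_)
        have h1 : (d y : ℝ) ≤ (s : ℝ) - 1 := by
          have : ((d y : ℕ) : ℝ) + 1 ≤ (s : ℝ) := by exact_mod_cast hlt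
          linarith
        exact h1
      rw [he0]
      have h1 : (0:ℝ) ≤ ((d y).choose s : ℝ) := by positivity
      have h2 : (0:ℝ) ≤ ((a : ℝ) - ((s : ℝ) - 1)) ^ s := by positivity
      have h3 : (0:ℝ) ^ s = 0 := zero_pow (by omega)
      rw [h3, zero_mul]
      positivity
    · have hdy : (s : ℝ) ≤ (d y : ℝ) := by exact_mod_cast hge
      have he1 : e y = (d y : ℝ) - ((s : ℝ) - 1) := by
        simp only [he]
        exact max_eq_left (by linarith)
      rw [he1]
      -- reduce to descFactorial products
      have hfac : (0:ℝ) < (Nat.factorial s : ℝ) := by exact_mod_cast s.factorial_pos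
      rw [← mul_le_mul_iff_right₀ hfac]
      have hdm : (Nat.factorial s : ℝ) * (((d y).choose s : ℝ) * ((a : ℝ) - ((s : ℝ) - 1)) ^ s)
          = ((d y).descFactorial s : ℝ) * ((a : ℝ) - ((s : ℝ) - 1)) ^ s := by
        rw [Nat.descFactorial_eq_factorial_mul_choose]; push_cast; ring
      have ham : (Nat.factorial s : ℝ) * (((d y : ℝ) - ((s : ℝ) - 1)) ^ s * (a.choose s : ℝ))
          = ((d y : ℝ) - ((s : ℝ) - 1)) ^ s * (a.descFactorial s : ℝ) := by
        rw [Nat.descFactorial_eq_factorial_mul_choose]; push_cast; ring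
      rw [hdm, ham]
      have hprodd : ((d y).descFactorial s : ℝ) = ∏ i ∈ Finset.range s, ((d y : ℝ) - i) := by
        rw [Nat.descFactorial_eq_prod_range, Nat.cast_prod]
        refine Finset.prod_congr rfl fun i hi => ?_
        rw [Nat.cast_sub (le_trans (le_of_lt (Finset.mem_range.mp hi)) hge)]
      have hproda : (a.descFactorial s : ℝ) = ∏ i ∈ Finset.range s, ((a : ℝ) - i) := by
        rw [Nat.descFactorial_eq_prod_range, Nat.cast_prod]
        refine Finset.prod_congr rfl fun i hi => ?_
        rw [Nat.cast_sub (le_trans (le_of_lt (Finset.mem_range.mp hi)) hsa)]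
      rw [hprodd, hproda]
      calc ((d y : ℝ) - ((s : ℝ) - 1)) ^ s * ∏ i ∈ Finset.range s, ((a : ℝ) - i)
          = ∏ i ∈ Finset.range s, (((d y : ℝ) - ((s : ℝ) - 1)) * ((a : ℝ) - i)) := by
            rw [Finset.prod_mul_distrib, Finset.prod_const, Finset.card_range]
        _ ≤ ∏ i ∈ Finset.range s, (((a : ℝ) - ((s : ℝ) - 1)) * ((d y : ℝ) - i)) := by
            refine Finset.prod_le_prod (fun i hi => ?_) (fun i hi => ?_)
            · have hi' : (i : ℝ) ≤ (s : ℝ) - 1 := by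
                have := Finset.mem_range.mp hi
                have : ((i : ℕ) : ℝ) + 1 ≤ (s : ℝ) := by exact_mod_cast this
                linarith
              have hdya : (d y : ℝ) ≤ (a : ℝ) := by exact_mod_cast hda y
              nlinarith
            · have hi' : (i : ℝ) ≤ (s : ℝ) - 1 := by
                have := Finset.mem_range.mp hi
                have : ((i : ℕ) : ℝ) + 1 ≤ (s : ℝ) := by exact_mod_cast this
                linarith
              have hdya : (d y : ℝ) ≤ (a : ℝ) := by exact_mod_cast hda y
              nlinarith
        _ = (∏ i ∈ Finset.range s, ((d y : ℝ) - i)) * ((a : ℝ) - ((s : ℝ) - 1)) ^ s := by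
            rw [Finset.prod_mul_distrib, Finset.prod_const, Finset.card_range, mul_comm]
  -- summed bound on ∑ e^s
  have hchoosepos : (0:ℝ) < (a.choose s : ℝ) := by exact_mod_cast Nat.choose_pos hsa
  have hesum : ∑ y ∈ B, (e y) ^ s ≤ ((t : ℝ) - 1) * ((a : ℝ) - ((s : ℝ) - 1)) ^ s := by
    have h1 : (∑ y ∈ B, (e y) ^ s) * (a.choose s : ℝ)
        ≤ ((t : ℝ) - 1) * (a.choose s : ℝ) * ((a : ℝ) - ((s : ℝ) - 1)) ^ s := by
      rw [Finset.sum_mul]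
      calc ∑ y ∈ B, (e y) ^ s * (a.choose s : ℝ)
          ≤ ∑ y ∈ B, ((d y).choose s : ℝ) * ((a : ℝ) - ((s : ℝ) - 1)) ^ s :=
            Finset.sum_le_sum fun y _ => hpoint y
        _ = (∑ y ∈ B, ((d y).choose s : ℝ)) * ((a : ℝ) - ((s : ℝ) - 1)) ^ s := by
            rw [Finset.sum_mul]
        _ ≤ ((t : ℝ) - 1) * (a.choose s : ℝ) * ((a : ℝ) - ((s : ℝ) - 1)) ^ s := by
            refine mul_le_mul_of_nonneg_right ?_ (by positivity)
            have : ((∑ y ∈ B, (d y).choose s : ℕ) : ℝ) ≤ (((t - 1) * a.choose s : ℕ) : ℝ) := by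
              exact_mod_cast hsum
            push_cast [Nat.cast_sub (by omega : 1 ≤ t)] at this
            simpa using this
    have h2 := mul_le_mul_of_nonneg_right h1 (le_of_lt (inv_pos.mpr hchoosepos))
    calc ∑ y ∈ B, (e y) ^ s
        = (∑ y ∈ B, (e y) ^ s) * (a.choose s : ℝ) * (a.choose s : ℝ)⁻¹ := by
          field_simp
      _ ≤ ((t : ℝ) - 1) * (a.choose s : ℝ) * ((a : ℝ) - ((s : ℝ) - 1)) ^ s * (a.choose s : ℝ)⁻¹ :=
          h2
      _ = ((t : ℝ) - 1) * ((a : ℝ) - ((s : ℝ) - 1)) ^ s := by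
          field_simp
  -- power mean
  have henn : ∀ y ∈ B, 0 ≤ e y := fun y _ => le_max_right _ _
  have hpm : (∑ y ∈ B, e y) ^ s ≤ (b : ℝ) ^ (s - 1) * (((t : ℝ) - 1) * ((a : ℝ) - ((s : ℝ) - 1)) ^ s) := by
    have h := pow_sum_div_card_le_sum_pow (s := B) (f := e) henn (s - 1)
    rw [Nat.sub_add_cancel (by omega : 1 ≤ s)] at h
    have hbpos : (0:ℝ) < (B.card : ℝ) ^ (s - 1) := by
      rw [hB]
      exact pow_pos (by exact_mod_cast (by omega : 0 < b)) _
    rw [div_le_iff₀ hbpos] at h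
    calc (∑ y ∈ B, e y) ^ s ≤ (∑ y ∈ B, (e y) ^ s) * (B.card : ℝ) ^ (s - 1) := h
      _ ≤ (((t : ℝ) - 1) * ((a : ℝ) - ((s : ℝ) - 1)) ^ s) * (b : ℝ) ^ (s - 1) := by
          rw [hB]
          exact mul_le_mul_of_nonneg_right hesum (by positivity)
      _ = (b : ℝ) ^ (s - 1) * (((t : ℝ) - 1) * ((a : ℝ) - ((s : ℝ) - 1)) ^ s) := mul_comm _ _
  -- take s-th root
  have hspos : (0:ℝ) < (s : ℝ) := by linarith
  have hesum_nonneg : 0 ≤ ∑ y ∈ B, e y := Finset.sum_nonneg henn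
  have hroot : ∑ y ∈ B, e y
      ≤ ((t : ℝ) - 1) ^ ((1 : ℝ) / s) * ((a : ℝ) - s + 1) * (b : ℝ) ^ (1 - (1 : ℝ) / s) := by
    have ht1 : (0:ℝ) ≤ (t : ℝ) - 1 := by
      have : (1:ℝ) ≤ (t:ℝ) := by exact_mod_cast (by omega : 1 ≤ t)
      linarith
    have hb0 : (0:ℝ) ≤ (b : ℝ) := by positivity
    have hRHS0 : (0:ℝ) ≤ (b : ℝ) ^ (s - 1) * (((t : ℝ) - 1) * ((a : ℝ) - ((s : ℝ) - 1)) ^ s) := by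
      positivity
    have h2 := Real.rpow_le_rpow (by positivity) hpm (by positivity : (0:ℝ) ≤ 1 / (s:ℝ))
    have hL : ((∑ y ∈ B, e y) ^ s) ^ ((1:ℝ) / s) = ∑ y ∈ B, e y := by
      rw [← Real.rpow_natCast (∑ y ∈ B, e y) s, ← Real.rpow_mul hesum_nonneg,
        mul_one_div, div_self (ne_of_gt hspos), Real.rpow_one]
    have hR : ((b : ℝ) ^ (s - 1) * (((t : ℝ) - 1) * ((a : ℝ) - ((s : ℝ) - 1)) ^ s)) ^ ((1:ℝ) / s)
        = (b : ℝ) ^ (1 - (1:ℝ) / s) * (((t : ℝ) - 1) ^ ((1:ℝ)/s) * ((a : ℝ) - ((s : ℝ) - 1))) := by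
      rw [Real.mul_rpow (by positivity) (by positivity),
        Real.mul_rpow ht1 (by positivity)]
      congr 1
      · rw [← Real.rpow_natCast (b:ℝ) (s-1), ← Real.rpow_mul hb0]
        congr 1
        rw [Nat.cast_sub (by omega : 1 ≤ s)]
        field_simp
        norm_num
      · congr 1
        rw [← Real.rpow_natCast ((a : ℝ) - ((s : ℝ) - 1)) s, ← Real.rpow_mul (by linarith),
          mul_one_div, div_self (ne_of_gt hspos), Real.rpow_one]
    rw [hL, hR] at h2
    calc ∑ y ∈ B, e y
        ≤ (b : ℝ) ^ (1 - (1:ℝ) / s) * (((t : ℝ) - 1) ^ ((1:ℝ)/s) * ((a : ℝ) - ((s : ℝ) - 1))) := h2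
      _ = ((t : ℝ) - 1) ^ ((1 : ℝ) / s) * ((a : ℝ) - s + 1) * (b : ℝ) ^ (1 - (1 : ℝ) / s) := by
          ring
  -- conclude
  have hde : ∀ y ∈ B, (d y : ℝ) ≤ e y + ((s : ℝ) - 1) := by
    intro y _
    have h' : (d y : ℝ) - ((s : ℝ) - 1) ≤ e y := le_max_left _ _
    linarith
  have hEsum : (E.card : ℝ) = ∑ y ∈ B, (d y : ℝ) := by
    rw [hcard]; push_cast; ring
  calc (E.card : ℝ) = ∑ y ∈ B, (d y : ℝ) := hEsum
    _ ≤ ∑ y ∈ B, (e y + ((s : ℝ) - 1)) := Finset.sum_le_sum hde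
    _ = (∑ y ∈ B, e y) + ((s : ℝ) - 1) * b := by
        rw [Finset.sum_add_distrib, Finset.sum_const, hB, nsmul_eq_mul]; ring
    _ ≤ ((t : ℝ) - 1) ^ ((1 : ℝ) / s) * ((a : ℝ) - s + 1) * (b : ℝ) ^ (1 - (1 : ℝ) / s)
        + ((s : ℝ) - 1) * b := by linarith [hroot]
end

section
/- Let X₁, ..., X_t be independent Bernoulli(p) random variables with 0 < p < 1, and suppose 0 < tp ≤ 1 and t ≥ β ≥ 1. Then P(X₁ + ... + X_t ≤ β) ≤ exp(βp − (tp)^{β+1}/(e·(β+1)!)). -/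
open MeasureTheory ProbabilityTheory

open Finset in
private lemma stmt_15_analytic (t β : ℕ) (p : ℝ) (hp0 : 0 < p) (hp1 : p < 1)
    (htp : (t:ℝ)*p ≤ 1) (hβt : β ≤ t) :
    ∑ k ∈ range (β+1), (t.choose k : ℝ) * p^k * (1-p)^(t-k) ≤
      Real.exp ((β:ℝ)*p - ((t:ℝ)*p)^(β+1)/(Real.exp 1 * ((β+1).factorial : ℝ))) := by
  have h1p : (0:ℝ) ≤ 1 - p := by linarith
  have hx0 : (0:ℝ) ≤ (t:ℝ)*p := by positivity
  set x : ℝ := (t:ℝ)*p with hxdef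
  have step1 : ∑ k ∈ range (β+1), (t.choose k : ℝ) * p^k * (1-p)^(t-k) ≤
      (1-p)^(t-β) * ∑ k ∈ range (β+1), x^k / k.factorial := by
    rw [Finset.mul_sum]
    refine Finset.sum_le_sum fun k hk => ?_
    have hkβ : k ≤ β := Nat.lt_succ_iff.mp (mem_range.mp hk)
    have hsplit : t - k = (t - β) + (β - k) := by omega
    rw [hsplit, pow_add]
    have h2 : ((1:ℝ)-p)^(β-k) ≤ 1 := pow_le_one₀ h1p (by linarith)
    have h3 : (t.choose k : ℝ) ≤ (t:ℝ)^k / k.factorial := by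
      exact_mod_cast Nat.choose_le_pow_div k t
    have h4 : (t.choose k : ℝ) * p^k ≤ x^k / k.factorial := by
      rw [hxdef, mul_pow]
      calc (t.choose k : ℝ) * p^k ≤ ((t:ℝ)^k / k.factorial) * p^k :=
            mul_le_mul_of_nonneg_right h3 (pow_nonneg hp0.le k)
        _ = (t:ℝ)^k * p^k / k.factorial := by ring
    calc (t.choose k : ℝ) * p^k * ((1-p)^(t-β) * (1-p)^(β-k))
        = (1-p)^(t-β) * ((t.choose k : ℝ) * p^k * (1-p)^(β-k)) := by ring
      _ ≤ (1-p)^(t-β) * (x^k / k.factorial) := by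
          refine mul_le_mul_of_nonneg_left ?_ (pow_nonneg h1p _)
          calc (t.choose k : ℝ) * p^k * (1-p)^(β-k) ≤ (x^k / k.factorial) * 1 := by
                refine mul_le_mul h4 h2 (pow_nonneg h1p _) (by positivity)
            _ = x^k / k.factorial := mul_one _
  have step2 : ((1:ℝ)-p)^(t-β) ≤ Real.exp (-(((t:ℝ)-β)*p)) := by
    have h5 : (1:ℝ) - p ≤ Real.exp (-p) := by
      have := Real.add_one_le_exp (-p); linarith
    have hc : ((t - β : ℕ) : ℝ) = (t:ℝ) - β := by
      push_cast [Nat.cast_sub hβt]; ring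
    calc ((1:ℝ)-p)^(t-β) ≤ (Real.exp (-p))^(t-β) := pow_le_pow_left₀ h1p h5 _
      _ = Real.exp (-(((t:ℝ)-β)*p)) := by
          rw [← Real.exp_nat_mul, ← hc]; ring_nf
  have step3 : ∑ k ∈ range (β+1), x^k / k.factorial ≤
      Real.exp x - x^(β+1) / (β+1).factorial := by
    have h6 := Real.sum_le_exp_of_nonneg hx0 (β+2)
    rw [Finset.sum_range_succ] at h6
    linarith
  have hfpos : (0:ℝ) < ((β+1).factorial : ℝ) := by positivity
  have step4 : Real.exp x - x^(β+1) / (β+1).factorial ≤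
      Real.exp x * Real.exp (- (x^(β+1) / (Real.exp 1 * (β+1).factorial))) := by
    have h7 : 1 - x^(β+1) / (Real.exp 1 * (β+1).factorial) ≤
        Real.exp (- (x^(β+1) / (Real.exp 1 * (β+1).factorial))) := by
      have := Real.add_one_le_exp (- (x^(β+1) / (Real.exp 1 * (β+1).factorial))); linarith
    have h8 : Real.exp x * (1 - x^(β+1) / (Real.exp 1 * (β+1).factorial)) =
        Real.exp x - Real.exp x * x^(β+1) / (Real.exp 1 * (β+1).factorial) := by ring
    have h9 : Real.exp x * x^(β+1) / (Real.exp 1 * (β+1).factorial) ≤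
        x^(β+1) / (β+1).factorial := by
      rw [div_le_div_iff₀ (by positivity) hfpos]
      have hex : Real.exp x ≤ Real.exp 1 := Real.exp_le_exp.mpr htp
      calc Real.exp x * x^(β+1) * ((β+1).factorial : ℝ)
          ≤ Real.exp 1 * x^(β+1) * ((β+1).factorial : ℝ) := by
            exact mul_le_mul_of_nonneg_right
              (mul_le_mul_of_nonneg_right hex (by positivity)) hfpos.le
        _ = x^(β+1) * (Real.exp 1 * (β+1).factorial) := by ring
    calc Real.exp x - x^(β+1) / (β+1).factorial
        ≤ Real.exp x - Real.exp x * x^(β+1) / (Real.exp 1 * (β+1).factorial) := by linarith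
      _ = Real.exp x * (1 - x^(β+1) / (Real.exp 1 * (β+1).factorial)) := h8.symm
      _ ≤ Real.exp x * Real.exp (- (x^(β+1) / (Real.exp 1 * (β+1).factorial))) :=
          mul_le_mul_of_nonneg_left h7 (Real.exp_pos x).le
  have hsum_nonneg : (0:ℝ) ≤ ∑ k ∈ range (β+1), x^k / k.factorial := by positivity
  calc ∑ k ∈ range (β+1), (t.choose k : ℝ) * p^k * (1-p)^(t-k)
      ≤ (1-p)^(t-β) * ∑ k ∈ range (β+1), x^k / k.factorial := step1
    _ ≤ Real.exp (-(((t:ℝ)-β)*p)) *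
        (Real.exp x * Real.exp (- (x^(β+1) / (Real.exp 1 * (β+1).factorial)))) :=
        mul_le_mul step2 (le_trans step3 step4) hsum_nonneg (Real.exp_pos _).le
    _ = Real.exp ((β:ℝ)*p - x^(β+1)/(Real.exp 1 * ((β+1).factorial : ℝ))) := by
        rw [← Real.exp_add, ← Real.exp_add, hxdef]; ring_nf

private lemma stmt_15_measE {Ω : Type*} [MeasurableSpace Ω] (μ : Measure Ω)
    [IsProbabilityMeasure μ] (t : ℕ) (p : ℝ) (X : Fin t → Ω → ℝ)
    (hp0 : 0 < p) (hp1 : p < 1)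
    (hmeas : ∀ i, Measurable (X i))
    (hind : iIndepFun X μ)
    (hbern : ∀ i ω, X i ω = 0 ∨ X i ω = 1)
    (hp : ∀ i, μ {ω | X i ω = 1} = ENNReal.ofReal p)
    (A : Finset (Fin t)) :
    μ {ω | ∀ i, X i ω = if i ∈ A then 1 else 0} =
      ENNReal.ofReal (p ^ A.card * (1-p) ^ (t - A.card)) := by
  have h1 : ∀ i, μ (X i ⁻¹' {1}) = ENNReal.ofReal p := by
    intro i
    have : X i ⁻¹' {1} = {ω | X i ω = 1} := by ext ω; simp
    rw [this, hp i]
  have h0 : ∀ i, μ (X i ⁻¹' {0}) = ENNReal.ofReal (1-p) := by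
    intro i
    have hc : X i ⁻¹' {0} = (X i ⁻¹' {1})ᶜ := by
      ext ω
      simp only [Set.mem_preimage, Set.mem_singleton_iff, Set.mem_compl_iff]
      constructor
      · intro h h1'; rw [h] at h1'; norm_num at h1'
      · intro h; exact (hbern i ω).resolve_right h
    rw [hc, measure_compl (hmeas i (measurableSet_singleton 1)) (measure_ne_top μ _),
      measure_univ, h1 i, ← ENNReal.ofReal_one, ← ENNReal.ofReal_sub _ hp0.le]
  have hE : {ω | ∀ i, X i ω = if i ∈ A then 1 else 0} =
      ⋂ i, X i ⁻¹' {if i ∈ A then (1:ℝ) else 0} := by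
    ext ω; simp [Set.mem_iInter]
  rw [hE, hind.meas_iInter
    (fun i => ⟨{if i ∈ A then (1:ℝ) else 0}, measurableSet_singleton _, rfl⟩)]
  have : ∀ i, μ (X i ⁻¹' {if i ∈ A then (1:ℝ) else 0}) =
      if i ∈ A then ENNReal.ofReal p else ENNReal.ofReal (1-p) := by
    intro i; split <;> simp [h1 i, h0 i]
  simp_rw [this]
  rw [Finset.prod_ite, Finset.prod_const, Finset.prod_const]
  have hcard1 : (Finset.univ.filter (· ∈ A)).card = A.card := by
    congr 1; ext i; simp
  have hcard2 : (Finset.univ.filter (· ∉ A)).card = t - A.card := by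
    have := Finset.card_filter_add_card_filter_not (s := (Finset.univ : Finset (Fin t)))
      (p := (· ∈ A))
    simp only [Finset.card_univ, Fintype.card_fin] at this
    omega
  rw [hcard1, hcard2, ← ENNReal.ofReal_pow hp0.le, ← ENNReal.ofReal_pow (by linarith),
    ← ENNReal.ofReal_mul (by positivity)]

open Finset in
private lemma stmt_15_law {Ω : Type*} [MeasurableSpace Ω] (μ : Measure Ω)
    [IsProbabilityMeasure μ] (t β : ℕ) (p : ℝ) (hp0 : 0 < p) (hp1 : p < 1)
    (X : Fin t → Ω → ℝ) (hmeas : ∀ i, Measurable (X i))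
    (hbern : ∀ i ω, X i ω = 0 ∨ X i ω = 1)
    (hmeasE : ∀ A : Finset (Fin t), μ {ω | ∀ i, X i ω = if i ∈ A then 1 else 0} =
      ENNReal.ofReal (p ^ A.card * (1-p) ^ (t - A.card))) :
    μ {ω | (∑ i, X i ω) ≤ (β : ℝ)} =
      ENNReal.ofReal (∑ k ∈ range (β+1), (t.choose k : ℝ) * (p^k * (1-p)^(t-k))) := by
  have h1p : (0:ℝ) ≤ 1 - p := by linarith
  set E : Finset (Fin t) → Set Ω := fun A => {ω | ∀ i, X i ω = if i ∈ A then 1 else 0}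
    with hEdef
  set S : Finset (Finset (Fin t)) := Finset.univ.filter (fun A => A.card ≤ β) with hSdef
  have hmem : ∀ (ω : Ω) (A : Finset (Fin t)), ω ∈ E A → ∀ i, (i ∈ A ↔ X i ω = 1) := by
    intro ω A h i
    constructor
    · intro hi; rw [h i, if_pos hi]
    · intro h1
      by_contra hi
      rw [h i, if_neg hi] at h1; norm_num at h1
  have hsum : ∀ ω : Ω, (∑ i, X i ω) = ((Finset.univ.filter (fun i => X i ω = 1)).card : ℝ) := by
    intro ω
    rw [Finset.card_filter]
    push_cast
    refine Finset.sum_congr rfl fun i _ => ?_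
    rcases hbern i ω with h | h <;> simp [h]
  have hdecomp : {ω | (∑ i, X i ω) ≤ (β : ℝ)} = ⋃ A ∈ S, E A := by
    ext ω
    simp only [Set.mem_setOf_eq, Set.mem_iUnion, exists_prop]
    constructor
    · intro h
      refine ⟨Finset.univ.filter (fun i => X i ω = 1), ?_, ?_⟩
      · rw [hSdef, Finset.mem_filter]
        refine ⟨Finset.mem_univ _, ?_⟩
        rw [hsum ω] at h; exact_mod_cast h
      · intro i
        by_cases hi : X i ω = 1
        · rw [if_pos (by simp [hi])]; exact hi
        · rw [if_neg (by simp [hi])]; exact (hbern i ω).resolve_right hi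
    · rintro ⟨A, hA, hE⟩
      have hAeq : Finset.univ.filter (fun i => X i ω = 1) = A := by
        ext i; simp only [Finset.mem_filter, Finset.mem_univ, true_and]
        exact (hmem ω A hE i).symm
      rw [hsum ω, hAeq]
      rw [hSdef, Finset.mem_filter] at hA
      exact_mod_cast hA.2
  have hdisj : (↑S : Set (Finset (Fin t))).PairwiseDisjoint E := by
    intro A _ B _ hAB
    refine Set.disjoint_left.mpr fun ω hA hB => hAB ?_
    ext i; rw [hmem ω A hA i, hmem ω B hB i]
  have hEmeas : ∀ A, MeasurableSet (E A) := by
    intro A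
    have : E A = ⋂ i, X i ⁻¹' {if i ∈ A then (1:ℝ) else 0} := by
      ext ω; simp [hEdef, Set.mem_iInter]
    rw [this]
    exact MeasurableSet.iInter fun i => hmeas i (measurableSet_singleton _)
  rw [hdecomp, measure_biUnion_finset hdisj fun A _ => hEmeas A]
  have hterm : ∀ A ∈ S, μ (E A) = ENNReal.ofReal (p ^ A.card * (1-p) ^ (t - A.card)) :=
    fun A _ => hmeasE A
  rw [Finset.sum_congr rfl hterm, ← ENNReal.ofReal_sum_of_nonneg (fun A _ => by positivity)]
  congr 1
  have hSeq : S = (range (β+1)).biUnion (fun k => Finset.powersetCard k Finset.univ) := by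
    ext A
    simp [hSdef, Finset.mem_powersetCard, Nat.lt_succ_iff, Finset.subset_univ, eq_comm]
  rw [hSeq, Finset.sum_biUnion]
  · refine Finset.sum_congr rfl fun k hk => ?_
    have : ∀ A ∈ Finset.powersetCard k (Finset.univ : Finset (Fin t)),
        p ^ A.card * (1-p) ^ (t - A.card) = p^k * (1-p)^(t-k) := by
      intro A hA
      rw [(Finset.mem_powersetCard.mp hA).2]
    rw [Finset.sum_congr rfl this, Finset.sum_const, Finset.card_powersetCard,
      Finset.card_univ, Fintype.card_fin, nsmul_eq_mul]
  · intro k1 hk1 k2 hk2 hne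
    refine Finset.disjoint_left.mpr fun A h1 h2 => hne ?_
    rw [← (Finset.mem_powersetCard.mp h1).2, ← (Finset.mem_powersetCard.mp h2).2]

theorem stmt_15 {Ω : Type*} [MeasurableSpace Ω] (μ : Measure Ω) [IsProbabilityMeasure μ]
    (t β : ℕ) (p : ℝ) (hp0 : 0 < p) (hp1 : p < 1) (htp0 : 0 < t * p) (htp : (t : ℝ) * p ≤ 1)
    (hβ : 1 ≤ β) (hβt : β ≤ t)
    (X : Fin t → Ω → ℝ) (hmeas : ∀ i, Measurable (X i))
    (hind : iIndepFun X μ)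
    (hbern : ∀ i ω, X i ω = 0 ∨ X i ω = 1)
    (hp : ∀ i, μ {ω | X i ω = 1} = ENNReal.ofReal p) :
    μ {ω | (∑ i, X i ω) ≤ (β : ℝ)} ≤
      ENNReal.ofReal (Real.exp ((β : ℝ) * p -
        ((t : ℝ) * p) ^ (β + 1) / (Real.exp 1 * ((β + 1).factorial : ℝ)))) := by
  rw [stmt_15_law μ t β p hp0 hp1 X hmeas hbern
    (stmt_15_measE μ t p X hp0 hp1 hmeas hind hbern hp)]
  refine ENNReal.ofReal_le_ofReal ?_
  calc ∑ k ∈ Finset.range (β+1), (t.choose k : ℝ) * (p^k * (1-p)^(t-k))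
      = ∑ k ∈ Finset.range (β+1), (t.choose k : ℝ) * p^k * (1-p)^(t-k) := by
        refine Finset.sum_congr rfl fun k _ => by ring
    _ ≤ _ := stmt_15_analytic t β p hp0 hp1 htp hβt
end
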